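/- arXiv:1811.04862 — 2 statements merged into one kernel-verified Lean document; each statement's English description precedes it below -/
import Mathlib

section
/- For ν₂ > 0, the improper integral M = ∫_{−∞}^{∞} y(t)·(ν₁ + (ν₃ − 3x(t)²)·y(t)) dt, where x(t) = √ν₂ tanh(√(ν₂/2) t) and y(t) = (ν₂/√2) sech²(√(ν₂/2) t), converges and equals (2/15)·√ν₂·(15ν₁ + 5√2·ν₂ν₃ − 3√2·ν₂²). -/
open MeasureTheory Real Filter Topology Set

private lemma my_hasDerivAt_tanh (x : ℝ) :
    HasDerivAt Real.tanh (1 / Real.cosh x ^ 2) x := by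
  have h : Real.tanh = fun y => Real.sinh y / Real.cosh y :=
    funext fun y => Real.tanh_eq_sinh_div_cosh y
  rw [h]
  have h2 := Real.cosh_sq_sub_sinh_sq x
  have hc := (Real.cosh_pos x).ne'
  have := (Real.hasDerivAt_sinh x).div (Real.hasDerivAt_cosh x) hc
  refine this.congr_deriv ?_
  congr 1
  nlinarith [h2]

private lemma my_tanh_exp (t : ℝ) :
    Real.tanh t = (1 - Real.exp (-(2*t))) / (1 + Real.exp (-(2*t))) := by
  have e1 : Real.exp (-(2*t)) = Real.exp (-t) * Real.exp (-t) := by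
    rw [← Real.exp_add]; ring_nf
  have e2 : Real.exp t * Real.exp (-t) = 1 := by
    rw [← Real.exp_add]; simp
  have hB : Real.exp t + Real.exp (-t) ≠ 0 := by positivity
  have hD : 1 + Real.exp (-(2*t)) ≠ 0 := by positivity
  rw [Real.tanh_eq_sinh_div_cosh, Real.sinh_eq, Real.cosh_eq]
  rw [div_div_div_comm]
  norm_num
  rw [div_eq_div_iff hB hD]
  linear_combination (2 * Real.exp t) * e1 + (2 * Real.exp (-t)) * e2

private lemma my_tendsto_tanh_top : Tendsto Real.tanh atTop (𝓝 1) := by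
  have hneg : Tendsto (fun t : ℝ => -(2*t)) atTop atBot :=
    tendsto_neg_atTop_atBot.comp (tendsto_id.const_mul_atTop two_pos)
  have h : Tendsto (fun t : ℝ => Real.exp (-(2*t))) atTop (𝓝 0) :=
    Real.tendsto_exp_atBot.comp hneg
  have hnum : Tendsto (fun t : ℝ => 1 - Real.exp (-(2*t))) atTop (𝓝 (1 - 0)) :=
    tendsto_const_nhds.sub h
  have hden : Tendsto (fun t : ℝ => 1 + Real.exp (-(2*t))) atTop (𝓝 (1 + 0)) :=
    tendsto_const_nhds.add h
  have this := hnum.div hden (by norm_num)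
  have heq : Real.tanh = fun t => (1 - Real.exp (-(2*t))) / (1 + Real.exp (-(2*t))) :=
    funext my_tanh_exp
  rw [heq]
  norm_num at this
  exact this

private lemma my_tendsto_tanh_bot : Tendsto Real.tanh atBot (𝓝 (-1)) := by
  have h := my_tendsto_tanh_top.comp tendsto_neg_atBot_atTop
  have heq : (Real.tanh ∘ Neg.neg) = fun t => -Real.tanh t :=
    funext fun t => by simp [Function.comp, Real.tanh_neg]
  rw [heq] at h
  simpa using h.neg

private lemma my_sech_sq (z : ℝ) : (1 / Real.cosh z) ^ 2 = 1 - Real.tanh z ^ 2 := by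
  have h := Real.cosh_sq_sub_sinh_sq z
  have hc := (Real.cosh_pos z).ne'
  rw [Real.tanh_eq_sinh_div_cosh]
  field_simp
  linarith [h]

theorem stmt_9 (ν₁ ν₂ ν₃ : ℝ) (hν₂ : 0 < ν₂) (x y : ℝ → ℝ)
    (hxdef : ∀ t, x t = Real.sqrt ν₂ * Real.tanh (Real.sqrt (ν₂ / 2) * t))
    (hydef : ∀ t, y t = ν₂ / Real.sqrt 2 * (1 / Real.cosh (Real.sqrt (ν₂ / 2) * t)) ^ 2) :
    Integrable (fun t => y t * (ν₁ + (ν₃ - 3 * (x t) ^ 2) * y t)) volume ∧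
    ∫ t : ℝ, y t * (ν₁ + (ν₃ - 3 * (x t) ^ 2) * y t)
      = (2 / 15) * Real.sqrt ν₂ *
        (15 * ν₁ + 5 * Real.sqrt 2 * ν₂ * ν₃ - 3 * Real.sqrt 2 * ν₂ ^ 2) := by
  have h2 : (0:ℝ) < Real.sqrt 2 := Real.sqrt_pos.mpr (by norm_num)
  have hsν : (0:ℝ) < Real.sqrt ν₂ := Real.sqrt_pos.mpr hν₂
  have hss : Real.sqrt ν₂ * Real.sqrt ν₂ = ν₂ := Real.mul_self_sqrt hν₂.le
  have hs2 : Real.sqrt 2 * Real.sqrt 2 = 2 := Real.mul_self_sqrt (by norm_num)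
  set a : ℝ := Real.sqrt (ν₂ / 2) with ha_def
  have ha_eq : a = Real.sqrt ν₂ / Real.sqrt 2 := Real.sqrt_div hν₂.le 2
  have ha : 0 < a := Real.sqrt_pos.mpr (by linarith)
  set c : ℝ := ν₂ / Real.sqrt 2 with hc_def
  set u : ℝ → ℝ := fun t => Real.tanh (a * t) with hu_def
  set s2 : ℝ → ℝ := fun t => (1 / Real.cosh (a * t)) ^ 2 with hs2_def
  set g : ℝ → ℝ := fun t => c * s2 t * (ν₁ + (ν₃ - 3 * (ν₂ * (u t) ^ 2)) * (c * s2 t))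
    with hg_def
  have hsech : ∀ t : ℝ, s2 t = 1 - (u t) ^ 2 := fun t => my_sech_sq (a * t)
  have hg : (fun t => y t * (ν₁ + (ν₃ - 3 * (x t) ^ 2) * y t)) = g := by
    funext t
    rw [hxdef t, hydef t]
    simp only [hg_def, hs2_def, hu_def, hc_def]
    rw [mul_pow, Real.sq_sqrt hν₂.le]
  -- derivative of u
  have hu : ∀ t : ℝ, HasDerivAt u (a * (1 - (u t) ^ 2)) t := by
    intro t
    have hin : HasDerivAt (fun s : ℝ => a * s) a t := by
      simpa using (hasDerivAt_id t).const_mul a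
    have h1 := (my_hasDerivAt_tanh (a * t)).comp t hin
    have : a * (1 - (u t) ^ 2) = 1 / Real.cosh (a * t) ^ 2 * a := by
      rw [← hsech t, hs2_def]
      ring
    rw [this]
    exact h1
  -- the antiderivative
  set P : ℝ → ℝ := fun v => c / a * ν₁ * v
    + c ^ 2 / a * (ν₃ * v - (ν₃ + 3 * ν₂) / 3 * v ^ 3 + 3 * ν₂ / 5 * v ^ 5) with hP_def
  have hF : ∀ t : ℝ, HasDerivAt (fun s => P (u s)) (g t) t := by
    intro t
    have hut := hu t
    have h1 : HasDerivAt (fun s => P (u s))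
        (c / a * ν₁ * (a * (1 - (u t) ^ 2))
          + c ^ 2 / a * (ν₃ * (a * (1 - (u t) ^ 2))
            - (ν₃ + 3 * ν₂) / 3 * ((3 : ℕ) * (u t) ^ 2 * (a * (1 - (u t) ^ 2)))
            + 3 * ν₂ / 5 * ((5 : ℕ) * (u t) ^ 4 * (a * (1 - (u t) ^ 2))))) t := by
      exact ((hut.const_mul (c / a * ν₁)).add
        ((((hut.const_mul ν₃).sub ((hut.pow 3).const_mul ((ν₃ + 3 * ν₂) / 3))).add
          ((hut.pow 5).const_mul (3 * ν₂ / 5))).const_mul (c ^ 2 / a)))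
    convert h1 using 1
    rw [hg_def]
    simp only [hsech t]
    push_cast
    field_simp
    ring
  -- limits of u
  have hmul_top : Tendsto (fun t : ℝ => a * t) atTop atTop :=
    tendsto_id.const_mul_atTop ha
  have hmul_bot : Tendsto (fun t : ℝ => a * t) atBot atBot :=
    tendsto_id.const_mul_atBot ha
  have hutop : Tendsto u atTop (𝓝 1) := my_tendsto_tanh_top.comp hmul_top
  have hubot : Tendsto u atBot (𝓝 (-1)) := my_tendsto_tanh_bot.comp hmul_bot
  have hPc : Continuous P := by fun_prop
  have hPtop : Tendsto (fun t => P (u t)) atTop (𝓝 (P 1)) := (hPc.tendsto 1).comp hutop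
  have hPbot : Tendsto (fun t => P (u t)) atBot (𝓝 (P (-1))) := (hPc.tendsto (-1)).comp hubot
  -- integrability of s2
  have hs2deriv : ∀ t : ℝ, HasDerivAt (fun s => u s / a) (s2 t) t := by
    intro t
    have := (hu t).div_const a
    have heq : a * (1 - (u t) ^ 2) / a = s2 t := by
      rw [hsech t]; field_simp
    rwa [heq] at this
  have hs2nonneg : ∀ t : ℝ, 0 ≤ s2 t := fun t => by rw [hs2_def]; positivity
  have hIoi : IntegrableOn s2 (Ioi (0:ℝ)) := by
    refine integrableOn_Ioi_deriv_of_nonneg' (fun z _ => hs2deriv z)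
      (fun z _ => hs2nonneg z) (l := 1 / a) ?_
    simpa using hutop.div_const a
  have hIio : IntegrableOn s2 (Iio (0:ℝ)) := by
    have hiff := MeasurePreserving.integrableOn_comp_preimage
      (Measure.measurePreserving_neg (volume : Measure ℝ))
      (Homeomorph.neg ℝ).measurableEmbedding (f := s2) (s := Ioi (0:ℝ))
    have h1 := hiff.2 hIoi
    have hset : ((fun z : ℝ => -z) ⁻¹' Ioi (0:ℝ)) = Iio 0 := by
      ext z; simp
    have hfun : (s2 ∘ fun z : ℝ => -z) = s2 := by
      funext t; simp [hs2_def, Function.comp, mul_neg, Real.cosh_neg]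
    rwa [hset, hfun] at h1
  have hs2int : Integrable s2 (volume : Measure ℝ) := by
    rw [← integrableOn_univ, ← Set.Iio_union_Ici (a := (0:ℝ))]
    exact hIio.union (Iff.mpr integrableOn_Ici_iff_integrableOn_Ioi hIoi)
  -- continuity of g
  have hs2c : Continuous s2 := by
    apply Continuous.pow
    exact continuous_const.div (Real.continuous_cosh.comp (continuous_const.mul continuous_id))
      (fun t => (Real.cosh_pos _).ne')
  have huc : Continuous u :=
    (Real.continuous_sinh.div Real.continuous_cosh fun z => (Real.cosh_pos z).ne').comp
      (continuous_const.mul continuous_id) |>.congr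
      (fun t => (Real.tanh_eq_sinh_div_cosh _).symm)
  have hgc : Continuous g := by
    rw [hg_def]; fun_prop
  -- bound and integrability of g
  set K : ℝ := |c| * (|ν₁| + (|ν₃| + 3 * ν₂) * |c|) with hK_def
  have hbound : ∀ t : ℝ, ‖g t‖ ≤ K * s2 t := by
    intro t
    have h1 : 0 ≤ s2 t := hs2nonneg t
    have hu2 : (u t) ^ 2 ≤ 1 := by
      nlinarith [hsech t, h1]
    have hle1 : s2 t ≤ 1 := by
      rw [hsech t]; nlinarith [sq_nonneg (u t)]
    rw [Real.norm_eq_abs, hg_def]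
    have h4 : |ν₁ + (ν₃ - 3 * (ν₂ * (u t) ^ 2)) * (c * s2 t)| ≤ |ν₁| + (|ν₃| + 3 * ν₂) * |c| := by
      refine (abs_add_le _ _).trans (add_le_add le_rfl ?_)
      rw [abs_mul, abs_mul, abs_of_nonneg h1]
      have h5 : |ν₃ - 3 * (ν₂ * (u t) ^ 2)| ≤ |ν₃| + 3 * ν₂ := by
        refine (abs_sub _ _).trans ?_
        have h6 : |3 * (ν₂ * (u t) ^ 2)| = 3 * (ν₂ * (u t) ^ 2) := abs_of_nonneg (by positivity)
        rw [h6]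
        nlinarith [sq_nonneg (u t)]
      calc |ν₃ - 3 * (ν₂ * (u t) ^ 2)| * (|c| * s2 t)
          ≤ (|ν₃| + 3 * ν₂) * (|c| * 1) := by
            apply mul_le_mul h5 _ (by positivity) (by positivity)
            exact mul_le_mul le_rfl hle1 h1 (abs_nonneg c)
        _ = (|ν₃| + 3 * ν₂) * |c| := by ring
    calc |c * s2 t * (ν₁ + (ν₃ - 3 * (ν₂ * (u t) ^ 2)) * (c * s2 t))|
        = (|c| * s2 t) * |ν₁ + (ν₃ - 3 * (ν₂ * (u t) ^ 2)) * (c * s2 t)| := by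
          rw [abs_mul, abs_mul, abs_of_nonneg h1]
      _ ≤ (|c| * s2 t) * (|ν₁| + (|ν₃| + 3 * ν₂) * |c|) :=
          mul_le_mul_of_nonneg_left h4 (by positivity)
      _ = K * s2 t := by rw [hK_def]; ring
  have hint : Integrable g (volume : Measure ℝ) := by
    refine (hs2int.const_mul K).mono' hgc.aestronglyMeasurable ?_
    exact ae_of_all _ fun t => by
      simpa [Real.norm_eq_abs, abs_of_nonneg (hs2nonneg t),
        abs_of_nonneg (le_trans (norm_nonneg (g t)) (hbound t))] using
        (hbound t).trans (le_abs_self _)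
  have hval : ∫ t : ℝ, g t = P 1 - P (-1) :=
    integral_of_hasDerivAt_of_tendsto hF hint hPbot hPtop
  -- compute the value
  have hca : c / a = Real.sqrt ν₂ := by
    rw [div_eq_iff ha.ne', ha_eq, hc_def, ← mul_div_assoc, hss]
  have hc2a : c ^ 2 / a = Real.sqrt 2 * ν₂ * Real.sqrt ν₂ / 2 := by
    rw [div_eq_iff ha.ne', ha_eq, hc_def]
    field_simp
    linear_combination (-(Real.sqrt ν₂ ^ 2)) * hs2 - 2 * hss
  have hfinal : P 1 - P (-1)
      = (2 / 15) * Real.sqrt ν₂ *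
        (15 * ν₁ + 5 * Real.sqrt 2 * ν₂ * ν₃ - 3 * Real.sqrt 2 * ν₂ ^ 2) := by
    have key : P 1 - P (-1) = 2 * (c / a) * ν₁ + (c ^ 2 / a) * (4 * ν₃ / 3 - 4 * ν₂ / 5) := by
      rw [hP_def]; ring
    rw [key, hca, hc2a]; ring
  constructor
  · rw [hg]; exact hint
  · rw [hg, hval, hfinal]
end

section
/- Consider the 3D system ẋ = a₁₁W(z)x + a₁₂y, ẏ = a₂₁x + a₂₂y, ż = x, where W is continuous and q(z) = ∫₀ᶻ W(s)ds. Then the function H(x,y,z) = −a₂₂x + a₁₂y − a₁₂a₂₁z + a₁₁a₂₂q(z) is a first integral: along any solution, H is constant. Hence for each h ∈ ℝ the level set S_h = {(x,y,z) : H(x,y,z) = h} is invariant under the flow. -/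
theorem stmt_14 (a₁₁ a₁₂ a₂₁ a₂₂ : ℝ) (W q : ℝ → ℝ)
    (hW : Continuous W)
    (hq : ∀ z, q z = ∫ s in (0:ℝ)..z, W s)
    (x y z : ℝ → ℝ)
    (hx : ∀ t, HasDerivAt x (a₁₁ * W (z t) * x t + a₁₂ * y t) t)
    (hy : ∀ t, HasDerivAt y (a₂₁ * x t + a₂₂ * y t) t)
    (hz : ∀ t, HasDerivAt z (x t) t)
    (H : ℝ → ℝ → ℝ → ℝ)
    (hH : ∀ u v w, H u v w = -a₂₂ * u + a₁₂ * v - a₁₂ * a₂₁ * w + a₁₁ * a₂₂ * q w) :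
    (∀ t, H (x t) (y t) (z t) = H (x 0) (y 0) (z 0)) ∧
    (∀ h : ℝ, H (x 0) (y 0) (z 0) = h →
      ∀ t, (x t, y t, z t) ∈ {p : ℝ × ℝ × ℝ | H p.1 p.2.1 p.2.2 = h}) := by
  have hq' : ∀ w : ℝ, HasDerivAt q (W w) w := by
    intro w
    have : HasDerivAt (fun u => ∫ s in (0:ℝ)..u, W s) (W w) w :=
      intervalIntegral.integral_hasDerivAt_right (hW.intervalIntegrable _ _)
        (hW.stronglyMeasurableAtFilter _ _) hW.continuousAt
    exact this.congr_of_eventuallyEq (Filter.Eventually.of_forall fun u => hq u)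
  have key : ∀ t, H (x t) (y t) (z t) = H (x 0) (y 0) (z 0) := by
    have hd : ∀ t, HasDerivAt (fun t => H (x t) (y t) (z t)) 0 t := by
      intro t
      have hqz : HasDerivAt (fun t => q (z t)) (W (z t) * x t) t :=
        (hq' (z t)).comp t (hz t)
      have : HasDerivAt (fun t => -a₂₂ * x t + a₁₂ * y t - a₁₂ * a₂₁ * z t
          + a₁₁ * a₂₂ * q (z t))
          (-a₂₂ * (a₁₁ * W (z t) * x t + a₁₂ * y t) + a₁₂ * (a₂₁ * x t + a₂₂ * y t)
            - a₁₂ * a₂₁ * x t + a₁₁ * a₂₂ * (W (z t) * x t)) t :=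
        ((((hx t).const_mul (-a₂₂)).add ((hy t).const_mul a₁₂)).sub
          ((hz t).const_mul (a₁₂ * a₂₁))).add (hqz.const_mul (a₁₁ * a₂₂))
      have h0 : -a₂₂ * (a₁₁ * W (z t) * x t + a₁₂ * y t) + a₁₂ * (a₂₁ * x t + a₂₂ * y t)
            - a₁₂ * a₂₁ * x t + a₁₁ * a₂₂ * (W (z t) * x t) = 0 := by ring
      rw [h0] at this
      exact this.congr_of_eventuallyEq (Filter.Eventually.of_forall fun u => hH _ _ _)
    intro t
    have := is_const_of_deriv_eq_zero (f := fun t => H (x t) (y t) (z t))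
      (fun s => (hd s).differentiableAt) (fun s => (hd s).deriv) t 0
    exact this
  exact ⟨key, fun h hh t => by simpa [key t] using hh⟩
end
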